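/- Assume: (1) M ≤ P implies M ∈ K, P ∈ K and M ⊆ P, and M ≤ M for every M ∈ K; (2) nf has right monotonicity, symmetry, and strong right transitivity; (3) δ ≤ μ are infinite regular cardinals; (4) (chain local character for singletons at δ and at μ) for δ' ∈ {δ, μ}, every ≤-increasing chain ⟨P_j : j < δ'⟩ of members of K, and every a ∈ U, there exists j < δ' with nf(P_j, {a}, ⋃_{j'<δ'} P_{j'}). Let ⟨X_i : i < δ⟩ be subsets of U and let ⟨N_i^α : i < δ, α < μ⟩ be members of K such that: for each i < δ the chain ⟨N_i^α : α < μ⟩ is ≤-increasing; for each α < μ the chain ⟨N_i^α : i < δ⟩ is ≤-increasing; for each i < δ the union N_i^μ := ⋃_{α<μ} N_i^α is a member of K and ⟨N_i^μ : i < δ⟩ is ≤-increasing; and for all α < μ, i < δ, and a ∈ X_i, (⋃_{j<δ} N_j^α) ⫫*_{N_i^{α+1}} {a}. Then for every i < δ and every a ∈ X_i, (⋃_{j<δ} N_j^μ) ⫫*_{N_i^μ} {a}. -/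

import Mathlib

universe u

/-- `A ⫫*_C B`: there is a model `M₀ ∈ K` contained in `C` with `nf M₀ A B`. -/
def nfm {U : Type u} (K : Set (Set U)) (nf : Set U → Set U → Set U → Prop)
    (A C B : Set U) : Prop :=
  ∃ M₀ ∈ K, M₀ ⊆ C ∧ nf M₀ A B

/-- The Claim inside the proof of Lemma `union-sat-2`: in an array
`⟨N_i^α : i < δ, α < μ⟩` with the stated coherence and independence properties,
`(⋃_j N_j^μ) ⫫*_{N_i^μ} {a}` for every `i < δ` and `a ∈ X_i`. -/
theorem stmt_8 {U : Type u} (K : Set (Set U)) (nf : Set U → Set U → Set U → Prop)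
    (le : Set U → Set U → Prop)
    (hle : ∀ M P : Set U, le M P → M ∈ K ∧ P ∈ K ∧ M ⊆ P)
    (hrefl : ∀ M ∈ K, le M M)
    (hrmono : ∀ M ∈ K, ∀ A B B₀ : Set U, nf M A B → B₀ ⊆ B → nf M A B₀)
    (hsym : ∀ M ∈ K, ∀ A B : Set U, nf M A B → nf M B A)
    (htrans : ∀ M₀ ∈ K, ∀ M₁ ∈ K, ∀ A B : Set U, nf M₀ A M₁ → nf M₁ A B → nf M₀ A B)
    (δ μ : Cardinal.{u}) (hδ : δ.IsRegular) (hμ : μ.IsRegular) (hδμ : δ ≤ μ)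
    (hchain : ∀ δ' : Cardinal.{u}, (δ' = δ ∨ δ' = μ) →
      ∀ P : Ordinal.{u} → Set U, (∀ j < δ'.ord, P j ∈ K) →
        (∀ i j : Ordinal.{u}, i < j → j < δ'.ord → le (P i) (P j)) →
        ∀ a : U, ∃ j < δ'.ord, nf (P j) {a} (⋃ j' < δ'.ord, P j'))
    (X : Ordinal.{u} → Set U) (N : Ordinal.{u} → Ordinal.{u} → Set U)
    (hcol : ∀ i < δ.ord, ∀ α β : Ordinal.{u}, α < β → β < μ.ord → le (N i α) (N i β))
    (hrow : ∀ α < μ.ord, ∀ i j : Ordinal.{u}, i < j → j < δ.ord → le (N i α) (N j α))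
    (hNμK : ∀ i < δ.ord, (⋃ α < μ.ord, N i α) ∈ K)
    (hNμinc : ∀ i j : Ordinal.{u}, i < j → j < δ.ord →
      le (⋃ α < μ.ord, N i α) (⋃ α < μ.ord, N j α))
    (hind : ∀ α < μ.ord, ∀ i < δ.ord, ∀ a ∈ X i,
      nfm K nf (⋃ j < δ.ord, N j α) (N i (α + 1)) {a}) :
    ∀ i < δ.ord, ∀ a ∈ X i,
      nfm K nf (⋃ j < δ.ord, ⋃ α < μ.ord, N j α) (⋃ α < μ.ord, N i α) {a} := by
  intro i hi a ha
  have hμlim : Order.IsSuccLimit μ.ord := Cardinal.isSuccLimit_ord hμ.aleph0_le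
  obtain ⟨j₀, hj₀, hnf1⟩ := hchain δ (Or.inl rfl) (fun j => ⋃ α < μ.ord, N j α)
    (fun j hj => hNμK j hj) hNμinc a
  have hlt1 : ∀ α : Ordinal.{u}, α < α + 1 := fun α => by
    rw [Ordinal.add_one_eq_succ]; exact Order.lt_succ α
  have hsucclt : ∀ α : Ordinal.{u}, α < μ.ord → α + 1 < μ.ord := fun α hα => by
    rw [Ordinal.add_one_eq_succ]; exact hμlim.succ_lt hα
  have hKcol : ∀ α < μ.ord, N j₀ α ∈ K := fun α hα =>
    (hle _ _ (hcol j₀ hj₀ α (α + 1) (hlt1 α) (hsucclt α hα))).1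
  obtain ⟨α₀, hα₀, hnf2⟩ := hchain μ (Or.inr rfl) (fun α => N j₀ α) hKcol
    (fun α β hαβ hβ => hcol j₀ hj₀ α β hαβ hβ) a
  obtain ⟨M, hMK, hMsub, hMnf⟩ := hind α₀ hα₀ i hi a ha
  refine ⟨M, hMK, fun x hx => Set.mem_iUnion₂.2 ⟨α₀ + 1, hsucclt α₀ hα₀, hMsub hx⟩, ?_⟩
  have h1 : nf M {a} (N j₀ α₀) :=
    hrmono M hMK {a} _ _ (hsym M hMK _ _ hMnf) (fun x hx => Set.mem_iUnion₂.2 ⟨j₀, hj₀, hx⟩)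
  have h2 : nf M {a} (⋃ α < μ.ord, N j₀ α) :=
    htrans M hMK (N j₀ α₀) (hKcol α₀ hα₀) {a} _ h1 hnf2
  have h3 : nf M {a} (⋃ j < δ.ord, ⋃ α < μ.ord, N j α) :=
    htrans M hMK _ (hNμK j₀ hj₀) {a} _ h2 hnf1
  exact hsym M hMK _ _ h3
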